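/- Let Q_a = ∏_{j=1}^p (cos β_j)^{θ(a_j)+θ(a_{−j})} (sin β_j)^{θ(−a_j)+θ(−a_{−j})} i^{θ(−a_j)−θ(−a_{−j})} for a ∈ {±1}^{2p}, where θ(b) = (1+b)/2. If a ∈ A_ℓ for some 1 ≤ ℓ ≤ p and ā is its bar (flipping signs at positions ±(p−ℓ+1)), then Q_{ā} = −Q_a. -/

import Mathlib

abbrev SKConf (p : ℕ) := Fin p × Bool → ℤˣ

def skPart (p ℓ : ℕ) : Finset (SKConf p) :=
  if ℓ = p + 1 then
    Finset.univ.filter (fun a => ∀ i : Fin p, a (i, false) = a (i, true))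
  else
    Finset.univ.filter (fun a =>
      (∀ i : Fin p, p - ℓ + 1 ≤ (i : ℕ) → a (i, false) = a (i, true)) ∧
        ∀ i : Fin p, (i : ℕ) = p - ℓ → a (i, false) = -(a (i, true)))

def barConf (p ℓ : ℕ) (a : SKConf p) : SKConf p :=
  fun x => if (x.1 : ℕ) = p - ℓ then -(a x) else a x

/-- θ(b) = (1+b)/2, so θ(1) = 1 and θ(-1) = 0. -/
def skTheta (u : ℤˣ) : ℤ := (1 + (u : ℤ)) / 2

/-- `Q_a = ∏_j (cos β_j)^{θ(a_j)+θ(a_{-j})} (sin β_j)^{θ(-a_j)+θ(-a_{-j})}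
i^{θ(-a_j)-θ(-a_{-j})}`. -/
noncomputable def skQ {p : ℕ} (β : Fin p → ℝ) (a : SKConf p) : ℂ :=
  ∏ j : Fin p,
    (Complex.cos (β j)) ^ (skTheta (a (j, true)) + skTheta (a (j, false))) *
      (Complex.sin (β j)) ^ (skTheta (-(a (j, true))) + skTheta (-(a (j, false)))) *
      Complex.I ^ (skTheta (-(a (j, true))) - skTheta (-(a (j, false))))

theorem stmt_19 (p ℓ : ℕ) (h1 : 1 ≤ ℓ) (h2 : ℓ ≤ p) (β : Fin p → ℝ)
    (a : SKConf p) (ha : a ∈ skPart p ℓ) :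
    skQ β (barConf p ℓ a) = -skQ β a := by
  have hr : p - ℓ < p := by omega
  set r : Fin p := ⟨p - ℓ, hr⟩ with hrdef
  have hne : ℓ ≠ p + 1 := by omega
  rw [skPart, if_neg hne, Finset.mem_filter] at ha
  obtain ⟨-, -, ha2⟩ := ha
  have hflip : a (r, false) = -(a (r, true)) := ha2 r rfl
  unfold skQ
  rw [← Finset.mul_prod_erase Finset.univ _ (Finset.mem_univ r),
      ← Finset.mul_prod_erase Finset.univ _ (Finset.mem_univ r)]
  have htail : ∀ j ∈ Finset.univ.erase r,
      (Complex.cos (β j)) ^ (skTheta (barConf p ℓ a (j, true)) + skTheta (barConf p ℓ a (j, false))) *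
        (Complex.sin (β j)) ^ (skTheta (-(barConf p ℓ a (j, true))) + skTheta (-(barConf p ℓ a (j, false)))) *
        Complex.I ^ (skTheta (-(barConf p ℓ a (j, true))) - skTheta (-(barConf p ℓ a (j, false)))) =
      (Complex.cos (β j)) ^ (skTheta (a (j, true)) + skTheta (a (j, false))) *
        (Complex.sin (β j)) ^ (skTheta (-(a (j, true))) + skTheta (-(a (j, false)))) *
        Complex.I ^ (skTheta (-(a (j, true))) - skTheta (-(a (j, false)))) := by
    intro j hj
    have hjr : j ≠ r := Finset.ne_of_mem_erase hj
    have hjv : (j : ℕ) ≠ p - ℓ := fun h => hjr (Fin.ext h)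
    simp [barConf, hjv]
  rw [Finset.prod_congr rfl htail]
  have hbar : ∀ b : Bool, barConf p ℓ a (r, b) = -(a (r, b)) := by
    intro b; simp [barConf]; rfl
  rw [hbar true, hbar false, hflip]
  rcases Int.units_eq_one_or (a (r, true)) with h | h <;>
    rw [h] <;> norm_num [skTheta]
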